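/- Let $u$ solve $u' = 2e^{u/m}(u-m)$, $u(0)=R_0^2 < m$, on $[0,\delta)$. Then for all $t \in [0,\delta)$, $e^{-u(t)/m} \geq \frac{2(m - R_0^2)}{m} t + e^{-R_0^2/m}$, equivalently $u(t) \leq -m \log\big(\frac{2(m-R_0^2)}{m} t + e^{-R_0^2/m}\big)$. -/

import Mathlib

open Real Set

/-- Explicit lower barrier for `e^{-u/m}` along the flow `u' = 2 e^{u/m}(u-m)`
when `u(0) = R₀² < m`. -/
theorem exp_barrier_below (m R0sq δ : ℝ) (hm : 0 < m) (hR0 : 0 < R0sq) (hRm : R0sq < m)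
    (u : ℝ → ℝ) (hu0 : u 0 = R0sq) (hrange : ∀ t ∈ Ico (0 : ℝ) δ, u t ∈ Ioo 0 m)
    (hode : ∀ t ∈ Ico (0 : ℝ) δ, HasDerivAt u (2 * exp (u t / m) * (u t - m)) t) :
    ∀ t ∈ Ico (0 : ℝ) δ,
      exp (-u t / m) ≥ 2 * (m - R0sq) / m * t + exp (-R0sq / m) ∧
      u t ≤ -m * Real.log (2 * (m - R0sq) / m * t + exp (-R0sq / m)) := by
  intro t ht
  have hm' : m ≠ 0 := ne_of_gt hm
  set c : ℝ := 2 * (m - R0sq) / m with hc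
  have hc0 : 0 ≤ c := by
    apply div_nonneg _ hm.le; nlinarith
  have hcont : ContinuousOn u (Ico 0 δ) :=
    fun s hs => ((hode s hs).continuousAt).continuousWithinAt
  have hanti : AntitoneOn u (Ico 0 δ) := by
    apply antitoneOn_of_deriv_nonpos (convex_Ico 0 δ) hcont
    · intro s hs
      rw [interior_Ico] at hs
      exact ((hode s (Ioo_subset_Ico_self hs)).differentiableAt).differentiableWithinAt
    · intro s hs
      rw [interior_Ico] at hs
      rw [(hode s (Ioo_subset_Ico_self hs)).deriv]
      have h2 := (hrange s (Ioo_subset_Ico_self hs)).2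
      nlinarith [Real.exp_pos (u s / m)]
  have h0mem : (0 : ℝ) ∈ Ico (0 : ℝ) δ := ⟨le_refl 0, lt_of_le_of_lt ht.1 ht.2⟩
  have hule : ∀ s ∈ Ico (0 : ℝ) δ, u s ≤ R0sq := by
    intro s hs
    have := hanti h0mem hs hs.1
    rwa [hu0] at this
  -- barrier function
  set F : ℝ → ℝ := fun s => exp (-u s / m) - c * s with hF
  have hFder : ∀ s ∈ Ico (0 : ℝ) δ,
      HasDerivAt F (exp (-u s / m) * (-(2 * exp (u s / m) * (u s - m)) / m) - c) s := by
    intro s hs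
    have h1 : HasDerivAt (fun x => -u x / m) (-(2 * exp (u s / m) * (u s - m)) / m) s :=
      ((hode s hs).neg).div_const m
    have h2 : HasDerivAt (fun x => exp (-u x / m))
        (exp (-u s / m) * (-(2 * exp (u s / m) * (u s - m)) / m)) s := h1.exp
    have h3 : HasDerivAt (fun x : ℝ => c * x) c s := by
      simpa using (hasDerivAt_id s).const_mul c
    exact h2.sub h3
  have hkey : ∀ s : ℝ, exp (-u s / m) * exp (u s / m) = 1 := by
    intro s
    rw [← Real.exp_add]
    ring_nf
    exact Real.exp_zero
  have hmono : MonotoneOn F (Ico 0 δ) := by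
    apply monotoneOn_of_deriv_nonneg (convex_Ico 0 δ)
    · exact fun s hs => ((hFder s hs).continuousAt).continuousWithinAt
    · intro s hs
      rw [interior_Ico] at hs
      exact ((hFder s (Ioo_subset_Ico_self hs)).differentiableAt).differentiableWithinAt
    · intro s hs
      rw [interior_Ico] at hs
      rw [(hFder s (Ioo_subset_Ico_self hs)).deriv]
      have heq : exp (-u s / m) * (-(2 * exp (u s / m) * (u s - m)) / m) - c
          = 2 * (R0sq - u s) / m := by
        rw [hc]
        field_simp
        have hk2 : exp (-(u s / m)) * exp (u s / m) = 1 := by rw [← neg_div]; exact hkey s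
        linear_combination (m - u s) * hk2
      rw [heq]
      have := hule s (Ioo_subset_Ico_self hs)
      apply div_nonneg (by linarith) hm.le
  have hF0 : F 0 = exp (-R0sq / m) := by simp [hF, hu0]
  have hFt : F 0 ≤ F t := hmono h0mem ht ht.1
  rw [hF0] at hFt
  have h1 : exp (-u t / m) ≥ c * t + exp (-R0sq / m) := by
    simp only [hF] at hFt; linarith
  refine ⟨h1, ?_⟩
  have hpos : 0 < c * t + exp (-R0sq / m) := by
    have := Real.exp_pos (-R0sq / m)
    nlinarith [mul_nonneg hc0 ht.1]
  have hlog : Real.log (c * t + exp (-R0sq / m)) ≤ -u t / m := by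
    have := Real.log_le_log hpos h1
    rwa [Real.log_exp] at this
  have h2 := mul_le_mul_of_nonneg_left hlog hm.le
  have h3 : m * (-u t / m) = -u t := by field_simp
  rw [h3] at h2
  linarith
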